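/- Let Q and P be pure unit quaternions with Re(P·Q) = 0 (P orthogonal to Q). Then for every t : ℝ one has e^{tQ} · P · e^{-tQ} = cos(2t) • P + sin(2t) • (Q·P). (This expresses that conjugation by e^{tQ} acts on the 2-sphere of pure unit quaternions as the rotation of angle 2t about the axis through Q.) -/

import Mathlib

open Quaternion

noncomputable section

/-- The quaternion `i`. -/
def qi : ℍ[ℝ] := ⟨0, 1, 0, 0⟩

/-- The quaternion `j`. -/
def qj : ℍ[ℝ] := ⟨0, 0, 1, 0⟩

/-- The quaternion `k`. -/
def qk : ℍ[ℝ] := ⟨0, 0, 0, 1⟩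

/-- The quaternionic exponential `e^{tQ} = cos t + (sin t) • Q` for a pure unit
quaternion `Q`. -/
def expQ (t : ℝ) (Q : ℍ[ℝ]) : ℍ[ℝ] := ((Real.cos t : ℝ) : ℍ[ℝ]) + (Real.sin t) • Q

/-- Conjugation by `e^{tQ}` rotates the 2-sphere of pure unit quaternions by angle `2t`
about the axis through `Q`: for `P` a pure unit quaternion orthogonal to `Q`,
`e^{tQ} P e^{-tQ} = cos(2t) • P + sin(2t) • (QP)`. -/
theorem rotation_of_conjugation (Q P : ℍ[ℝ])
    (hQnorm : ‖Q‖ = 1) (hQre : Q.re = 0)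
    (hPnorm : ‖P‖ = 1) (hPre : P.re = 0)
    (hperp : (P * Q).re = 0) :
    ∀ t : ℝ, expQ t Q * P * expQ (-t) Q
      = Real.cos (2 * t) • P + Real.sin (2 * t) • (Q * P) := by
  intro t
  have hQn : Q.imI^2 + Q.imJ^2 + Q.imK^2 = 1 := by
    have h := Quaternion.normSq_eq_norm_mul_self Q
    rw [hQnorm] at h
    simp [Quaternion.normSq_def', hQre] at h
    nlinarith [h]
  have hperp' : P.imI * Q.imI + P.imJ * Q.imJ + P.imK * Q.imK = 0 := by
    have := hperp
    simp [Quaternion.re_mul, hQre, hPre] at this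
    linarith
  have hc := Real.cos_sq_add_sin_sq t
  have hc2 : Real.cos (2*t) = Real.cos t^2 - Real.sin t^2 := by
    rw [Real.cos_two_mul]; nlinarith [hc]
  have hs2 : Real.sin (2*t) = 2 * Real.sin t * Real.cos t := Real.sin_two_mul t
  apply Quaternion.ext <;>
    simp only [expQ, Quaternion.re_add, Quaternion.imI_add, Quaternion.imJ_add,
      Quaternion.imK_add, Quaternion.re_mul, Quaternion.imI_mul, Quaternion.imJ_mul,
      Quaternion.imK_mul, Quaternion.re_smul, Quaternion.imI_smul, Quaternion.imJ_smul,
      Quaternion.imK_smul, Quaternion.re_coe, Quaternion.imI_coe, Quaternion.imJ_coe,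
      Quaternion.imK_coe, hQre, hPre, hc2, hs2, Real.cos_neg, Real.sin_neg,
      smul_eq_mul, mul_zero, zero_mul, mul_one, one_mul, add_zero, zero_add,
      neg_zero, sub_zero, zero_sub, neg_neg, neg_mul, mul_neg]
  · linear_combination (2 * Real.sin t * Real.cos t) * hperp'
  · linear_combination (-(Real.sin t ^ 2 * P.imI)) * hQn +
      (2 * Real.sin t ^ 2 * Q.imI) * hperp'
  · linear_combination (-(Real.sin t ^ 2 * P.imJ)) * hQn +
      (2 * Real.sin t ^ 2 * Q.imJ) * hperp'
  · linear_combination (-(Real.sin t ^ 2 * P.imK)) * hQn +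
      (2 * Real.sin t ^ 2 * Q.imK) * hperp'
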